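/- For every ideal I ⊆ R = ℂ[x_1,…,x_N] and every nonzero g ∈ R, the dual space of the quotient (colon) ideal satisfies D_0[I : ⟨g⟩] = g·D_0[I] := {g·q : q ∈ D_0[I]}, where I : ⟨g⟩ = {f ∈ R : gf ∈ I}. -/

import Mathlib

open MvPolynomial

noncomputable section

/-- The polynomial ring `R = ℂ[x_1,…,x_N]`, with variables indexed by `Fin N`. -/
abbrev PolyR (N : ℕ) := MvPolynomial (Fin N) ℂ

/-- A dual functional `q = Σ_α c_α ∂^α` is encoded by its coefficient vector, i.e.
by an element of `MvPolynomial (Fin N) ℂ` (which is exactly the space of finitely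
supported functions `ℕ^N →₀ ℂ`).  Its application to a polynomial `f` is
`q(f) = Σ_α c_α · (coefficient of x^α in f)`. -/
def dapply {N : ℕ} (q f : PolyR N) : ℂ := ∑ α ∈ f.support, q.coeff α * f.coeff α

/-- The Macaulay dual space `D_0[I]` of an ideal `I`, as a `ℂ`-subspace of `D_0`. -/
def dualSpace {N : ℕ} (I : Ideal (PolyR N)) : Submodule ℂ (PolyR N) where
  carrier := {q | ∀ f ∈ I, dapply q f = 0}
  zero_mem' := by intro f _; simp [dapply]
  add_mem' := by
    intro a b ha hb f hf
    have h : dapply (a + b) f = dapply a f + dapply b f := by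
      simp [dapply, MvPolynomial.coeff_add, add_mul, Finset.sum_add_distrib]
    rw [h, ha f hf, hb f hf, add_zero]
  smul_mem' := by
    intro c q hq f hf
    have h : dapply (c • q) f = c * dapply q f := by
      simp [dapply, MvPolynomial.coeff_smul, Finset.mul_sum, mul_assoc]
    rw [h, hq f hf, mul_zero]

/-- The subspace of dual functionals all of whose exponents satisfy `P`. -/
def expSupported {N : ℕ} (P : (Fin N →₀ ℕ) → Prop) : Submodule ℂ (PolyR N) where
  carrier := {q | ∀ α ∈ q.support, P α}
  zero_mem' := by simp
  add_mem' := by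
    intro a b ha hb α hα
    rcases Finset.mem_union.mp (MvPolynomial.support_add hα) with h | h
    · exact ha α h
    · exact hb α h
  smul_mem' := by
    intro c q hq α hα
    exact hq α (MvPolynomial.support_smul hα)

/-- The truncated dual space `D_0^k[I]`: functionals in `D_0[I]` of order at most `k`
(in particular `0` belongs to it). -/
def truncDual {N : ℕ} (I : Ideal (PolyR N)) (k : ℕ) : Submodule ℂ (PolyR N) :=
  dualSpace I ⊓ expSupported (fun α => ∑ i, α i ≤ k)

/-- The eliminating truncated dual space `E_0^d[I, A]`, where the set of variables `A`
is given by a finite set of indices: functionals in `D_0[I]` with `ord_A ≤ d`. -/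
def elimDual {N : ℕ} (I : Ideal (PolyR N)) (A : Finset (Fin N)) (d : ℕ) :
    Submodule ℂ (PolyR N) :=
  dualSpace I ⊓ expSupported (fun α => ∑ i ∈ A, α i ≤ d)

open scoped Classical in
/-- The action `g · q` of the polynomial ring on dual functionals, determined by
`(g·q)(f) = q(g·f)`; concretely `g · ∂^α = Σ_{γ ≤ α} g_γ ∂^{α-γ}`. -/
def dmul {N : ℕ} (g q : PolyR N) : PolyR N :=
  ∑ γ ∈ g.support, ∑ α ∈ q.support,
    if γ ≤ α then (MvPolynomial.monomial (α - γ)) (g.coeff γ * q.coeff α) else 0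

/-- The maximal ideal `m = ⟨x_1,…,x_N⟩` of the origin. -/
def mIdeal (N : ℕ) : Ideal (PolyR N) := Ideal.span (Set.range MvPolynomial.X)

/-- The multiplicative set of polynomials not vanishing at the origin. -/
def atOrigin (N : ℕ) : Submonoid (PolyR N) where
  carrier := {g | MvPolynomial.constantCoeff g ≠ 0}
  one_mem' := by simp
  mul_mem' := by
    intro a b ha hb
    simp only [Set.mem_setOf_eq, map_mul]
    exact mul_ne_zero ha hb

/-- The local ring `R_0` of the origin: the localization of `R` at the maximal ideal
of the origin. -/
abbrev LocR (N : ℕ) := Localization (atOrigin N)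

/-- The extension `I·R_0` of an ideal `I ⊆ R` to the local ring of the origin. -/
def extIdeal {N : ℕ} (I : Ideal (PolyR N)) : Ideal (LocR N) :=
  Ideal.map (algebraMap (PolyR N) (LocR N)) I

/-- The contraction `I·R_0 ∩ R` of the extension of `I` back to `R`. -/
def contExt {N : ℕ} (I : Ideal (PolyR N)) : Ideal (PolyR N) :=
  Ideal.comap (algebraMap (PolyR N) (LocR N)) (extIdeal I)

/-- The local Hilbert function
`H_I(k) = dim_ℂ R/(I + m^{k+1}) − dim_ℂ R/(I + m^k)`
(note that for `k = 0` the subtrahend vanishes since `m^0 = R`). -/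
def hilb {N : ℕ} (I : Ideal (PolyR N)) (k : ℕ) : ℕ :=
  Module.finrank ℂ (PolyR N ⧸ (I + mIdeal N ^ (k + 1)))
    - Module.finrank ℂ (PolyR N ⧸ (I + mIdeal N ^ k))


/-- degree of an exponent vector -/
def degs {N : ℕ} (α : Fin N →₀ ℕ) : ℕ := ∑ i, α i

lemma degs_add {N : ℕ} (α β : Fin N →₀ ℕ) : degs (α + β) = degs α + degs β := by
  simp [degs, Finset.sum_add_distrib]

lemma degs_mono {N : ℕ} {α β : Fin N →₀ ℕ} (h : α ≤ β) : degs α ≤ degs β :=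
  Finset.sum_le_sum fun i _ => Finsupp.le_def.mp h i

lemma dapply_sum_subset {N : ℕ} {q f : PolyR N} {s : Finset (Fin N →₀ ℕ)}
    (h : f.support ⊆ s) : dapply q f = ∑ α ∈ s, q.coeff α * f.coeff α :=
  Finset.sum_subset h (fun x _ hx => by
    rw [MvPolynomial.notMem_support_iff.mp hx, mul_zero])

lemma dapply_comm {N : ℕ} (q f : PolyR N) : dapply q f = dapply f q := by
  rw [dapply_sum_subset (s := f.support ∪ q.support) Finset.subset_union_left,
    dapply_sum_subset (s := f.support ∪ q.support) Finset.subset_union_right]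
  exact Finset.sum_congr rfl fun α _ => mul_comm _ _

lemma dapply_add_right {N : ℕ} (q f₁ f₂ : PolyR N) :
    dapply q (f₁ + f₂) = dapply q f₁ + dapply q f₂ := by
  have h1 : (f₁ + f₂).support ⊆ f₁.support ∪ f₂.support := MvPolynomial.support_add
  rw [dapply_sum_subset h1,
    dapply_sum_subset (q := q) (f := f₁) (s := f₁.support ∪ f₂.support) Finset.subset_union_left,
    dapply_sum_subset (q := q) (f := f₂) (s := f₁.support ∪ f₂.support) Finset.subset_union_right,
    ← Finset.sum_add_distrib]
  exact Finset.sum_congr rfl fun α _ => by rw [MvPolynomial.coeff_add, mul_add]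

lemma dapply_smul_right {N : ℕ} (c : ℂ) (q f : PolyR N) :
    dapply q (c • f) = c * dapply q f := by
  have h1 : (c • f).support ⊆ f.support := MvPolynomial.support_smul
  rw [dapply_sum_subset h1, dapply, Finset.mul_sum]
  exact Finset.sum_congr rfl fun α _ => by
    rw [MvPolynomial.coeff_smul, smul_eq_mul]; ring

lemma dapply_add_left {N : ℕ} (q₁ q₂ f : PolyR N) :
    dapply (q₁ + q₂) f = dapply q₁ f + dapply q₂ f := by
  rw [dapply_comm, dapply_add_right, dapply_comm f, dapply_comm f]

lemma dapply_smul_left {N : ℕ} (c : ℂ) (q f : PolyR N) :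
    dapply (c • q) f = c * dapply q f := by
  rw [dapply_comm, dapply_smul_right, dapply_comm]

lemma dapply_monomial {N : ℕ} (q : PolyR N) (α : Fin N →₀ ℕ) (c : ℂ) :
    dapply q (MvPolynomial.monomial α c) = q.coeff α * c := by
  rw [dapply_sum_subset (s := {α}) MvPolynomial.support_monomial_subset,
    Finset.sum_singleton, MvPolynomial.coeff_monomial, if_pos rfl]

lemma dapply_eq_zero_of_support {N : ℕ} {q f : PolyR N}
    (h : ∀ α ∈ f.support, q.coeff α = 0) : dapply q f = 0 :=
  Finset.sum_eq_zero fun α hα => by rw [h α hα, zero_mul]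

/-- `dapply` as a bilinear map. -/
def dapplyBL {N : ℕ} : PolyR N →ₗ[ℂ] PolyR N →ₗ[ℂ] ℂ :=
  LinearMap.mk₂ ℂ dapply dapply_add_left dapply_smul_left dapply_add_right dapply_smul_right

lemma coeff_dmul {N : ℕ} (g q : PolyR N) (β : Fin N →₀ ℕ) :
    (dmul g q).coeff β = ∑ γ ∈ g.support, g.coeff γ * q.coeff (β + γ) := by
  classical
  rw [dmul, MvPolynomial.coeff_sum]
  refine Finset.sum_congr rfl fun γ _ => ?_
  rw [MvPolynomial.coeff_sum]
  have hterm : ∀ α ∈ q.support,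
      MvPolynomial.coeff β (if γ ≤ α then (MvPolynomial.monomial (α - γ)) (g.coeff γ * q.coeff α) else 0)
        = if α = β + γ then g.coeff γ * q.coeff α else 0 := by
    intro α _
    by_cases h1 : γ ≤ α
    · rw [if_pos h1, MvPolynomial.coeff_monomial]
      by_cases h2 : α = β + γ
      · rw [if_pos (by rw [h2, add_tsub_cancel_right]), if_pos h2]
      · rw [if_neg (fun hc => h2 (by rw [← hc, tsub_add_cancel_of_le h1])), if_neg h2]
    · rw [if_neg h1, if_neg (fun h2 : α = β + γ => h1 (h2 ▸ le_add_self)), MvPolynomial.coeff_zero]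
  rw [Finset.sum_congr rfl hterm, Finset.sum_ite_eq' q.support (β + γ)]
  split_ifs with h
  · rfl
  · rw [MvPolynomial.notMem_support_iff.mp h, mul_zero]

lemma mul_eq_sum_monomial {N : ℕ} (g f : PolyR N) :
    g * f = ∑ γ ∈ g.support, ∑ β ∈ f.support,
      MvPolynomial.monomial (γ + β) (g.coeff γ * f.coeff β) := by
  conv_lhs => rw [g.as_sum, f.as_sum, Finset.sum_mul_sum]
  exact Finset.sum_congr rfl fun γ _ => Finset.sum_congr rfl fun β _ =>
    MvPolynomial.monomial_mul

lemma dapply_dmul {N : ℕ} (g q f : PolyR N) :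
    dapply (dmul g q) f = dapply q (g * f) := by
  have hL : dapply (dmul g q) f
      = ∑ β ∈ f.support, ∑ γ ∈ g.support, g.coeff γ * q.coeff (β + γ) * f.coeff β := by
    rw [dapply]
    exact Finset.sum_congr rfl fun β _ => by rw [coeff_dmul, Finset.sum_mul]
  have hR : dapply q (g * f)
      = ∑ γ ∈ g.support, ∑ β ∈ f.support, q.coeff (γ + β) * (g.coeff γ * f.coeff β) := by
    rw [mul_eq_sum_monomial]
    rw [show dapply q (∑ γ ∈ g.support, ∑ β ∈ f.support,
        MvPolynomial.monomial (γ + β) (g.coeff γ * f.coeff β))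
      = ∑ γ ∈ g.support, dapply q (∑ β ∈ f.support,
        MvPolynomial.monomial (γ + β) (g.coeff γ * f.coeff β)) from
      map_sum (dapplyBL q) _ _]
    refine Finset.sum_congr rfl fun γ _ => ?_
    rw [show dapply q (∑ β ∈ f.support, MvPolynomial.monomial (γ + β) (g.coeff γ * f.coeff β))
      = ∑ β ∈ f.support, dapply q (MvPolynomial.monomial (γ + β) (g.coeff γ * f.coeff β)) from
      map_sum (dapplyBL q) _ _]
    exact Finset.sum_congr rfl fun β _ => dapply_monomial _ _ _
  rw [hL, hR, Finset.sum_comm]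
  refine Finset.sum_congr rfl fun γ _ => Finset.sum_congr rfl fun β _ => ?_
  rw [add_comm β γ]; ring


lemma degs_single {N : ℕ} (i : Fin N) : degs (Finsupp.single i 1) = 1 := by
  simp [degs, Finsupp.single_apply]

lemma exists_index_of_degs_pos {N : ℕ} {α : Fin N →₀ ℕ} (h : 1 ≤ degs α) :
    ∃ i, α i ≠ 0 := by
  by_contra hc
  push_neg at hc
  simp only [degs] at h
  rw [Finset.sum_congr rfl fun i _ => hc i, Finset.sum_const_zero] at h
  omega

lemma monomial_factor {N : ℕ} {α : Fin N →₀ ℕ} {i : Fin N} (h : α i ≠ 0) :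
    MvPolynomial.monomial α (1 : ℂ)
      = MvPolynomial.monomial (α - Finsupp.single i 1) (1 : ℂ) * MvPolynomial.X i := by
  rw [MvPolynomial.X, MvPolynomial.monomial_mul, one_mul,
    tsub_add_cancel_of_le (Finsupp.single_le_iff.mpr (Nat.one_le_iff_ne_zero.mpr h))]

lemma mIdeal_pow_eq_span {N : ℕ} (k : ℕ) :
    mIdeal N ^ k
      = Ideal.span ((fun s => MvPolynomial.monomial s (1 : ℂ)) '' {α | k ≤ degs α}) := by
  induction k with
  | zero =>
    rw [pow_zero, Ideal.one_eq_top, eq_comm, Ideal.eq_top_iff_one]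
    exact Ideal.subset_span ⟨0, by simp, by simp⟩
  | succ k ih =>
    rw [pow_succ, ih, mIdeal, Ideal.span_mul_span']
    apply le_antisymm
    · rw [Ideal.span_le]
      rintro x ⟨y, ⟨β, hβ, rfl⟩, z, ⟨i, rfl⟩, rfl⟩
      simp only [Set.mem_setOf_eq] at hβ
      show (MvPolynomial.monomial β (1:ℂ)) * MvPolynomial.X i ∈ _
      rw [MvPolynomial.X, MvPolynomial.monomial_mul, one_mul]
      exact Ideal.subset_span ⟨β + Finsupp.single i 1,
        by simp only [Set.mem_setOf_eq, degs_add, degs_single]; omega, rfl⟩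
    · rw [Ideal.span_le]
      rintro x ⟨γ, hγ, rfl⟩
      simp only [Set.mem_setOf_eq] at hγ
      obtain ⟨i, hi⟩ := exists_index_of_degs_pos (le_trans (by omega) hγ)
      show (MvPolynomial.monomial γ (1:ℂ)) ∈ _
      rw [monomial_factor hi]
      apply Ideal.subset_span
      refine Set.mul_mem_mul ⟨γ - Finsupp.single i 1, ?_, rfl⟩ ⟨i, rfl⟩
      have h1 : Finsupp.single i 1 ≤ γ :=
        Finsupp.single_le_iff.mpr (Nat.one_le_iff_ne_zero.mpr hi)
      have := degs_add (γ - Finsupp.single i 1) (Finsupp.single i 1)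
      rw [tsub_add_cancel_of_le h1, degs_single] at this
      simp only [Set.mem_setOf_eq]
      omega

lemma mem_mIdeal_pow {N : ℕ} {k : ℕ} {f : PolyR N} :
    f ∈ mIdeal N ^ k ↔ ∀ α ∈ f.support, k ≤ degs α := by
  rw [mIdeal_pow_eq_span, MvPolynomial.mem_ideal_span_monomial_image]
  refine forall₂_congr fun α _ => ⟨?_, fun h => ⟨α, h, le_rfl⟩⟩
  rintro ⟨s, hs, hle⟩
  exact le_trans hs (degs_mono hle)

lemma monomial_mem_mIdeal_pow {N : ℕ} {k : ℕ} {α : Fin N →₀ ℕ} {c : ℂ}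
    (h : k ≤ degs α) : MvPolynomial.monomial α c ∈ mIdeal N ^ k :=
  mem_mIdeal_pow.mpr fun β hβ => by
    rw [Finset.mem_singleton.mp (MvPolynomial.support_monomial_subset hβ)]; exact h

open scoped Classical in
/-- truncation to degrees `≤ e`, as a function -/
def truncF {N : ℕ} (e : ℕ) (f : PolyR N) : PolyR N :=
  ∑ α ∈ f.support.filter (fun α => degs α ≤ e), MvPolynomial.monomial α (f.coeff α)

open scoped Classical in
lemma coeff_truncF {N : ℕ} (e : ℕ) (f : PolyR N) (β : Fin N →₀ ℕ) :
    (truncF e f).coeff β = if degs β ≤ e then f.coeff β else 0 := by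
  rw [truncF, MvPolynomial.coeff_sum]
  rw [Finset.sum_congr rfl (fun α _ => MvPolynomial.coeff_monomial β α (f.coeff α)),
    Finset.sum_ite_eq' _ β]
  by_cases hb : degs β ≤ e
  · rw [if_pos hb]
    by_cases hs : β ∈ f.support
    · rw [if_pos (Finset.mem_filter.mpr ⟨hs, hb⟩)]
    · rw [if_neg (fun hc => hs (Finset.mem_filter.mp hc).1),
        MvPolynomial.notMem_support_iff.mp hs]
  · rw [if_neg hb,
      if_neg (fun hc : β ∈ f.support.filter (fun α => degs α ≤ e) =>
        hb (Finset.mem_filter.mp hc).2)]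

lemma truncF_mem_pow {N : ℕ} (e : ℕ) (f : PolyR N) :
    f - truncF e f ∈ mIdeal N ^ (e + 1) := by
  refine mem_mIdeal_pow.mpr fun α hα => ?_
  rw [MvPolynomial.mem_support_iff] at hα
  by_contra hc
  push_neg at hc
  have hd : degs α ≤ e := by omega
  apply hα
  rw [MvPolynomial.coeff_sub, coeff_truncF, if_pos hd, sub_self]

lemma truncF_support {N : ℕ} (e : ℕ) (f : PolyR N) {α : Fin N →₀ ℕ}
    (h : α ∈ (truncF e f).support) : degs α ≤ e := by
  rw [MvPolynomial.mem_support_iff, coeff_truncF] at h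
  by_contra hc
  exact h (if_neg hc)

/-- truncation as a linear map -/
def truncL {N : ℕ} (e : ℕ) : PolyR N →ₗ[ℂ] PolyR N where
  toFun := truncF e
  map_add' f g := by
    apply MvPolynomial.ext
    intro β
    simp only [MvPolynomial.coeff_add, coeff_truncF]
    split_ifs <;> simp
  map_smul' c f := by
    apply MvPolynomial.ext
    intro β
    simp only [MvPolynomial.coeff_smul, coeff_truncF, RingHom.id_apply]
    split_ifs <;> simp

lemma dapply_truncF {N : ℕ} {e : ℕ} {q : PolyR N} (hq : ∀ α ∈ q.support, degs α ≤ e)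
    (f : PolyR N) : dapply q (truncF e f) = dapply q f := by
  have h : dapply q (f - truncF e f) = 0 := by
    refine dapply_eq_zero_of_support fun α hα => ?_
    rw [MvPolynomial.notMem_support_iff.symm]
    intro hc
    have h1 := hq α hc
    rw [MvPolynomial.mem_support_iff, MvPolynomial.coeff_sub, coeff_truncF, if_pos h1,
      sub_self] at hα
    exact hα rfl
  have h2 : dapply q f = dapply q (truncF e f) + dapply q (f - truncF e f) := by
    rw [← dapply_add_right]; ring_nf
  rw [h2, h, add_zero]

lemma artin_rees_colon {N : ℕ} (I : Ideal (PolyR N)) (g : PolyR N) (d : ℕ) :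
    ∃ e : ℕ, d ≤ e ∧ ∀ f : PolyR N, g * f ∈ I ⊔ mIdeal N ^ (e + 1) →
      f ∈ Submodule.colon I (Ideal.span {g}) ⊔ mIdeal N ^ (d + 1) := by
  obtain ⟨k, hk⟩ := Ideal.exists_pow_inf_eq_pow_smul (mIdeal N)
    ((I ⊔ Ideal.span {g} : Ideal (PolyR N)) : Submodule (PolyR N) (PolyR N))
  refine ⟨k + d + 1, by omega, fun f hf => ?_⟩
  set n := k + d + 2 with hn
  obtain ⟨a, ha, h, hh, hsum⟩ := Submodule.mem_sup.mp hf
  have hgf : g * f ∈ (I ⊔ Ideal.span {g} : Ideal (PolyR N)) :=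
    Submodule.mem_sup_right (Ideal.mem_span_singleton.mpr ⟨f, rfl⟩)
  have hmem : h ∈ mIdeal N ^ n ⊓ (I ⊔ Ideal.span {g} : Ideal (PolyR N)) := by
    constructor
    · exact hh
    · have : h = g * f - a := by rw [← hsum]; ring
      rw [this]
      exact Submodule.sub_mem _ hgf (Submodule.mem_sup_left ha)
  have hAR := hk n (by omega)
  -- translate `I^n • ⊤` to `I^n`
  have htop : ∀ m : ℕ, (mIdeal N ^ m • (⊤ : Submodule (PolyR N) (PolyR N)))
      = (mIdeal N ^ m : Submodule (PolyR N) (PolyR N)) := by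
    intro m
    rw [Ideal.smul_eq_mul, Ideal.mul_top]
  rw [← htop n] at hmem
  rw [hAR, htop k] at hmem
  have hle : mIdeal N ^ (n - k) • (mIdeal N ^ k ⊓ (I ⊔ Ideal.span {g}) :
      Submodule (PolyR N) (PolyR N))
      ≤ mIdeal N ^ (n - k) * I ⊔ Ideal.span {g} * mIdeal N ^ (n - k) := by
    rw [Ideal.smul_eq_mul]
    calc mIdeal N ^ (n - k) * (mIdeal N ^ k ⊓ (I ⊔ Ideal.span {g}))
        ≤ mIdeal N ^ (n - k) * (I ⊔ Ideal.span {g}) :=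
          Ideal.mul_mono_right inf_le_right
      _ = mIdeal N ^ (n - k) * I ⊔ mIdeal N ^ (n - k) * Ideal.span {g} := by
          rw [Ideal.mul_sup]
      _ = mIdeal N ^ (n - k) * I ⊔ Ideal.span {g} * mIdeal N ^ (n - k) := by
          rw [mul_comm (mIdeal N ^ (n - k)) (Ideal.span {g})]
  have hmem2 := hle hmem
  obtain ⟨b, hb, c, hc, hsum2⟩ := Submodule.mem_sup.mp hmem2
  obtain ⟨z, hz, hgz⟩ := Ideal.mem_span_singleton_mul.mp hc
  have hbI : b ∈ I := Ideal.mul_le_right hb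
  -- g * (f - z) ∈ I
  have hgfz : g * (f - z) ∈ I := by
    have : g * (f - z) = a + b := by
      rw [mul_sub, hgz]
      linear_combination -hsum - hsum2
    rw [this]
    exact Ideal.add_mem _ ha hbI
  have hfz : f - z ∈ Submodule.colon I (Ideal.span {g}) :=
    Submodule.mem_colon_span_singleton.mpr (by rwa [smul_eq_mul, mul_comm])
  have hzmem : z ∈ mIdeal N ^ (d + 1) := by
    have hnk : n - k = d + 2 := by omega
    rw [hnk] at hz
    exact Ideal.pow_le_pow_right (by omega) hz
  have : f = (f - z) + z := by ring
  rw [this]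
  exact Submodule.add_mem _ (Submodule.mem_sup_left hfz) (Submodule.mem_sup_right hzmem)

/-- finite-dimensional annihilator/image duality -/
lemma dualAnn_comap {K V : Type*} [Field K] [AddCommGroup V] [Module K V]
    [FiniteDimensional K V] (T : V →ₗ[K] V) (U : Submodule K V) :
    (U.comap T).dualAnnihilator = U.dualAnnihilator.map T.dualMap := by
  have h1 : LinearMap.ker (U.mkQ.comp T) = U.comap T := by
    rw [LinearMap.ker_comp, Submodule.ker_mkQ]
  rw [← h1, ← LinearMap.range_dualMap_eq_dualAnnihilator_ker,
    ← LinearMap.dualMap_comp_dualMap, LinearMap.range_comp,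
    Submodule.range_dualMap_mkQ_eq]

lemma mem_RTD {N e : ℕ} (p : PolyR N) :
    p ∈ restrictTotalDegree (Fin N) ℂ e ↔ ∀ α ∈ p.support, degs α ≤ e := by
  rw [MvPolynomial.mem_restrictTotalDegree, MvPolynomial.totalDegree, Finset.sup_le_iff]
  refine forall₂_congr fun α _ => ?_
  rw [show (α.sum fun _ n => n) = degs α from Finsupp.sum_fintype _ _ fun _ => rfl]

lemma dual_colon_surj {N : ℕ} (I : Ideal (PolyR N)) (g : PolyR N) (q' : PolyR N)
    (hq' : ∀ f ∈ Submodule.colon I (Ideal.span {g}), dapply q' f = 0) :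
    ∃ q : PolyR N, (∀ f ∈ I, dapply q f = 0) ∧ dmul g q = q' := by
  classical
  set d := q'.support.sup degs with hd_def
  have hd : ∀ α ∈ q'.support, degs α ≤ d := fun α h => Finset.le_sup h
  obtain ⟨e, hde, hAR⟩ := artin_rees_colon I g d
  set VS := restrictTotalDegree (Fin N) ℂ e with hVS
  have hVSmem : ∀ p : PolyR N, p ∈ VS ↔ ∀ α ∈ p.support, degs α ≤ e := fun p => mem_RTD p
  -- the bilinear form on VS
  set BV : ↥VS →ₗ[ℂ] ↥VS →ₗ[ℂ] ℂ := dapplyBL.compl₁₂ VS.subtype VS.subtype with hBVdef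
  have hBVapp : ∀ v w : ↥VS, BV v w = dapply (v : PolyR N) (w : PolyR N) := fun v w => rfl
  have hmono : ∀ (α : Fin N →₀ ℕ), degs α ≤ e →
      (MvPolynomial.monomial α (1 : ℂ)) ∈ VS := by
    intro α hα
    rw [hVSmem]
    intro β hβ
    rw [Finset.mem_singleton.mp (MvPolynomial.support_monomial_subset hβ)]
    exact hα
  have hsep : ∀ v : ↥VS, (∀ w : ↥VS, dapply (v : PolyR N) (w : PolyR N) = 0) → v = 0 := by
    intro v hv
    have hcoeff : ∀ α, MvPolynomial.coeff α (v : PolyR N) = 0 := by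
      intro α
      by_cases hα : α ∈ (v : PolyR N).support
      · have hdeg : degs α ≤ e := (mem_RTD (v : PolyR N)).mp v.2 α hα
        have := hv ⟨MvPolynomial.monomial α 1, hmono α hdeg⟩
        rw [Submodule.coe_mk, dapply_monomial, mul_one] at this
        exact this
      · exact MvPolynomial.notMem_support_iff.mp hα
    exact Subtype.ext (MvPolynomial.ext _ _ fun α => by simp [hcoeff])
  have hBV : LinearMap.BilinForm.Nondegenerate BV := by
    exact ⟨fun v hv => hsep v fun w => by rw [← hBVapp]; exact hv w,
      fun v hv => hsep v fun w => by rw [dapply_comm, ← hBVapp]; exact hv w⟩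
  -- the truncated multiplication operator
  have hTmem : ∀ f : ↥VS,
      ((truncL e).comp ((LinearMap.mulLeft ℂ g).comp VS.subtype)) f ∈ VS := by
    intro f
    rw [hVSmem]
    intro α hα
    exact truncF_support e _ hα
  set T : ↥VS →ₗ[ℂ] ↥VS :=
    LinearMap.codRestrict VS ((truncL e).comp ((LinearMap.mulLeft ℂ g).comp VS.subtype))
      hTmem with hTdef
  have hTapp : ∀ w : ↥VS, ((T w : PolyR N)) = truncF e (g * (w : PolyR N)) := fun w => rfl
  set U : Submodule ℂ ↥VS :=
    (((I ⊔ mIdeal N ^ (e + 1) : Ideal (PolyR N)).restrictScalars ℂ).comap VS.subtype)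
    with hUdef
  -- q' lives in VS
  have hq'VS : q' ∈ VS := by
    rw [hVSmem]
    exact fun α hα => le_trans (hd α hα) hde
  set φ' : Module.Dual ℂ ↥VS := (LinearMap.BilinForm.toDual BV hBV) ⟨q', hq'VS⟩ with hφ'def
  have hφ'app : ∀ w : ↥VS, φ' w = dapply q' (w : PolyR N) := fun w => rfl
  have hφ' : φ' ∈ (U.comap T).dualAnnihilator := by
    rw [Submodule.mem_dualAnnihilator]
    intro w hw
    rw [hφ'app]
    -- `T w ∈ U` means `truncF e (g * w) ∈ I + m^(e+1)`
    have h1 : truncF e (g * (w : PolyR N)) ∈ (I ⊔ mIdeal N ^ (e + 1) : Ideal (PolyR N)) := hw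
    have h2 : g * (w : PolyR N) ∈ (I ⊔ mIdeal N ^ (e + 1) : Ideal (PolyR N)) := by
      have h3 := truncF_mem_pow e (g * (w : PolyR N))
      have := Submodule.add_mem _ h1 (Submodule.mem_sup_right h3 :
        g * (w : PolyR N) - truncF e (g * (w : PolyR N))
          ∈ (I ⊔ mIdeal N ^ (e + 1) : Ideal (PolyR N)))
      rwa [add_sub_cancel] at this
    obtain ⟨f₁, hf₁, f₂, hf₂, hsum⟩ := Submodule.mem_sup.mp (hAR _ h2)
    have hw2 : (w : PolyR N) = f₁ + f₂ := hsum.symm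
    rw [hw2, dapply_add_right, hq' f₁ hf₁, zero_add]
    refine dapply_eq_zero_of_support fun α hα => ?_
    have hdeg : d + 1 ≤ degs α := mem_mIdeal_pow.mp hf₂ α hα
    rw [← MvPolynomial.notMem_support_iff]
    intro hc
    exact absurd (hd α hc) (by omega)
  rw [dualAnn_comap] at hφ'
  obtain ⟨ψ, hψ, hTψ⟩ := hφ'
  set qv : ↥VS := (LinearMap.BilinForm.toDual BV hBV).symm ψ with hqvdef
  have hqvapp : ∀ w : ↥VS, dapply (qv : PolyR N) (w : PolyR N) = ψ w := by
    intro w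
    rw [← hBVapp]
    exact LinearMap.BilinForm.apply_toDual_symm_apply (B := BV) (hB := hBV) ψ w
  have hqvsupp : ∀ α ∈ (qv : PolyR N).support, degs α ≤ e := (hVSmem _).mp qv.2
  refine ⟨qv, ?_, ?_⟩
  · -- qv annihilates I
    intro f hf
    rw [← dapply_truncF hqvsupp f]
    have hmem : truncF e f ∈ VS := by
      rw [hVSmem]; exact fun α hα => truncF_support e f hα
    have hU : (⟨truncF e f, hmem⟩ : ↥VS) ∈ U := by
      show truncF e f ∈ (I ⊔ mIdeal N ^ (e + 1) : Ideal (PolyR N))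
      have h3 := truncF_mem_pow e f
      have := Submodule.sub_mem _ (Submodule.mem_sup_left hf : f ∈ _)
        (Submodule.mem_sup_right h3 : f - truncF e f ∈ (I ⊔ mIdeal N ^ (e + 1) : Ideal (PolyR N)))
      rwa [sub_sub_cancel] at this
    rw [show (truncF e f : PolyR N) = ((⟨truncF e f, hmem⟩ : ↥VS) : PolyR N) from rfl, hqvapp]
    exact (Submodule.mem_dualAnnihilator ψ).mp hψ _ hU
  · -- dmul g qv = q'
    have happ : ∀ w : ↥VS, dapply (dmul g (qv : PolyR N)) (w : PolyR N) = dapply q' (w : PolyR N) := by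
      intro w
      have h1 : ψ (T w) = dapply q' ↑w := by
        have h2 := congrArg (fun φ : Module.Dual ℂ ↥VS => φ w) hTψ
        simpa [LinearMap.dualMap_apply, hφ'app] using h2
      calc dapply (dmul g (qv : PolyR N)) (w : PolyR N)
          = dapply (qv : PolyR N) (g * (w : PolyR N)) := dapply_dmul g _ _
        _ = dapply (qv : PolyR N) (truncF e (g * (w : PolyR N))) := (dapply_truncF hqvsupp _).symm
        _ = dapply (qv : PolyR N) ((T w : PolyR N)) := by rw [hTapp]
        _ = ψ (T w) := hqvapp (T w)
        _ = dapply q' (w : PolyR N) := h1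
    apply MvPolynomial.ext
    intro α
    by_cases hα : degs α ≤ e
    · have := happ ⟨MvPolynomial.monomial α 1, hmono α hα⟩
      rw [Submodule.coe_mk, dapply_monomial, dapply_monomial, mul_one, mul_one] at this
      exact this
    · have hq'0 : MvPolynomial.coeff α q' = 0 := by
        rw [← MvPolynomial.notMem_support_iff]
        intro hc
        exact hα (le_trans (hd α hc) hde)
      rw [hq'0, coeff_dmul]
      refine Finset.sum_eq_zero fun γ _ => ?_
      have : MvPolynomial.coeff (α + γ) (qv : PolyR N) = 0 := by
        rw [← MvPolynomial.notMem_support_iff]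
        intro hc
        have := hqvsupp _ hc
        rw [degs_add] at this
        omega
      rw [this, mul_zero]


/-- For every ideal `I ⊆ R` and every nonzero `g ∈ R`,
`D_0[I : ⟨g⟩] = g · D_0[I]`. -/
theorem statement10 {N : ℕ} (hN : 1 ≤ N) (I : Ideal (PolyR N)) (g : PolyR N)
    (hg : g ≠ 0) :
    (dualSpace (Submodule.colon I (Ideal.span {g})) : Set (PolyR N))
      = (fun q : PolyR N => dmul g q) '' (dualSpace I : Set (PolyR N)) := by
  ext q'
  simp only [Set.mem_image, SetLike.mem_coe]
  constructor
  · intro hq'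
    have hq'' : ∀ f ∈ Submodule.colon I (Ideal.span {g}), dapply q' f = 0 := hq'
    obtain ⟨q, hq, hdq⟩ := dual_colon_surj I g q' hq''
    exact ⟨q, hq, hdq⟩
  · rintro ⟨q, hq, rfl⟩
    intro f hf
    have hgf : g * f ∈ I := by
      have := Submodule.mem_colon_span_singleton.mp hf
      rwa [smul_eq_mul, mul_comm] at this
    rw [dapply_dmul]
    exact hq _ hgf
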